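/- Let m ≥ 2 be an integer and 1 ≤ p, q ≤ ∞. Suppose there is a constant C > 0 such that (∫₀¹ |f̂(x, x^m)|^q dx)^{1/q} ≤ C ‖f‖_{L^p(ℝ²)} for every Schwartz function f on ℝ². Then 1/q ≥ (m+1)/p'. -/

import Mathlib

open MeasureTheory Set
open scoped FourierTransform ENNReal

noncomputable section KnappAux

open Metric
open scoped RealInnerProductSpace

/-- A smooth compactly supported function is a Schwartz function. -/
def schwartzOfCompactSupport {E F : Type*} [NormedAddCommGroup E] [NormedSpace ℝ E]
    [NormedAddCommGroup F] [NormedSpace ℝ F]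
    (f : E → F) (h1 : ContDiff ℝ ((⊤ : ℕ∞) : WithTop ℕ∞) f) (h2 : HasCompactSupport f) :
    SchwartzMap E F where
  toFun := f
  smooth' := h1
  decay' := by
    intro k n
    have hcont : Continuous fun x => ‖x‖ ^ k * ‖iteratedFDeriv ℝ n f x‖ :=
      ((continuous_norm.pow k).mul
        (h1.continuous_iteratedFDeriv (by exact_mod_cast le_top)).norm)
    have hsupp : HasCompactSupport fun x => ‖x‖ ^ k * ‖iteratedFDeriv ℝ n f x‖ :=
      ((h2.iteratedFDeriv n).norm).mul_left
    obtain ⟨C, hC⟩ := hcont.bounded_above_of_compact_support hsupp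
    exact ⟨C, fun x => (le_abs_self _).trans ((Real.norm_eq_abs _).symm ▸ hC x)⟩

@[simp] lemma schwartzOfCompactSupport_apply {E F : Type*} [NormedAddCommGroup E]
    [NormedSpace ℝ E] [NormedAddCommGroup F] [NormedSpace ℝ F]
    (f : E → F) (h1 : ContDiff ℝ ((⊤ : ℕ∞) : WithTop ℕ∞) f) (h2 : HasCompactSupport f) (x : E) :
    schwartzOfCompactSupport f h1 h2 x = f x := rfl

abbrev E2 := EuclideanSpace ℝ (Fin 2)

/-- A bump function on the plane, equal to `1` on the ball of radius `2`. -/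
def bump2 : ContDiffBump (0 : E2) := ⟨2, 3, two_pos, by norm_num⟩

/-- The bump function as a complex-valued Schwartz function. -/
def gBump : SchwartzMap E2 ℂ :=
  schwartzOfCompactSupport (fun x => (bump2 x : ℂ))
    (Complex.ofRealCLM.contDiff.comp (f := fun x => bump2 x) bump2.contDiff)
    (bump2.hasCompactSupport.comp_left (g := fun r : ℝ => (r : ℂ)) (by simp))

lemma gBump_eq_one {x : E2} (hx : ‖x‖ ≤ 2) : gBump x = 1 := by
  have := bump2.one_of_mem_closedBall (x := x) (by simpa [Metric.mem_closedBall, dist_zero_right])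
  change ((bump2 x : ℝ) : ℂ) = 1
  rw [this, Complex.ofReal_one]

def diagMat (a b : ℝ) : Matrix (Fin 2) (Fin 2) ℝ := Matrix.diagonal ![a, b]

lemma diagMat_det (a b : ℝ) : (diagMat a b).det = a * b := by
  simp [diagMat, Matrix.det_diagonal, Fin.prod_univ_two]

lemma diagMat_mul (a b a' b' : ℝ) :
    diagMat a b * diagMat a' b' = diagMat (a * a') (b * b') := by
  have h : (fun i => ![a, b] i * ![a', b'] i) = ![a * a', b * b'] := by
    funext i; fin_cases i <;> simp
  rw [diagMat, diagMat, diagMat, Matrix.diagonal_mul_diagonal, h]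

lemma diagMat_one : diagMat 1 1 = 1 := by
  have h : ![(1:ℝ), 1] = fun _ => (1:ℝ) := by funext i; fin_cases i <;> simp
  rw [diagMat, h, Matrix.diagonal_one]

def diagEquiv {a b : ℝ} (ha : a ≠ 0) (hb : b ≠ 0) : (Fin 2 → ℝ) ≃ₗ[ℝ] (Fin 2 → ℝ) :=
  LinearEquiv.ofLinear (Matrix.toLin' (diagMat a b)) (Matrix.toLin' (diagMat a⁻¹ b⁻¹))
    (by rw [← Matrix.toLin'_mul, diagMat_mul, mul_inv_cancel₀ ha, mul_inv_cancel₀ hb,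
          diagMat_one, Matrix.toLin'_one])
    (by rw [← Matrix.toLin'_mul, diagMat_mul, inv_mul_cancel₀ ha, inv_mul_cancel₀ hb,
          diagMat_one, Matrix.toLin'_one])

/-- The anisotropic dilation `(x, y) ↦ (a•x, b•y)` of the plane. -/
def Dmap {a b : ℝ} (ha : a ≠ 0) (hb : b ≠ 0) : E2 ≃L[ℝ] E2 :=
  (EuclideanSpace.equiv (Fin 2) ℝ).trans
    (((diagEquiv ha hb).toContinuousLinearEquiv).trans (EuclideanSpace.equiv (Fin 2) ℝ).symm)

lemma Dmap_apply {a b : ℝ} (ha : a ≠ 0) (hb : b ≠ 0) (x : E2) (i : Fin 2) :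
    Dmap ha hb x i = ![a, b] i * x i := by
  simp [Dmap, diagEquiv, Matrix.toLin'_apply, diagMat, Matrix.mulVec_diagonal]
  fin_cases i <;> simp

lemma Dmap_symm_apply {a b : ℝ} (ha : a ≠ 0) (hb : b ≠ 0) (x : E2) (i : Fin 2) :
    (Dmap ha hb).symm x i = ![a⁻¹, b⁻¹] i * x i := by
  simp [Dmap, diagEquiv, Matrix.toLin'_apply, diagMat, Matrix.mulVec_diagonal]
  fin_cases i <;> simp

lemma map_Dmap {a b : ℝ} (ha : a ≠ 0) (hb : b ≠ 0) :
    Measure.map (⇑(Dmap ha hb)) volume = ENNReal.ofReal |(a * b)⁻¹| • volume := by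
  set e : E2 ≃ₗ[ℝ] (Fin 2 → ℝ) := (EuclideanSpace.equiv (Fin 2) ℝ).toLinearEquiv
  set L : E2 →ₗ[ℝ] E2 := ↑e.symm ∘ₗ Matrix.toLin' (diagMat a b) ∘ₗ ↑e
  have hdet : LinearMap.det L = a * b := by
    have : L = ↑e.symm ∘ₗ Matrix.toLin' (diagMat a b) ∘ₗ ↑e.symm.symm := by simp [L]
    rw [this, LinearMap.det_conj, LinearMap.det_toLin', diagMat_det]
  have hfun : ⇑(Dmap ha hb) = ⇑L := rfl
  rw [hfun, Measure.map_linearMap_addHaar_eq_smul_addHaar volume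
    (by rw [hdet]; exact mul_ne_zero ha hb), hdet]

lemma lintegral_comp_Dmap {a b : ℝ} (ha : a ≠ 0) (hb : b ≠ 0) (H : E2 → ℝ≥0∞) :
    ∫⁻ x, H (Dmap ha hb x) = ENNReal.ofReal |(a * b)⁻¹| * ∫⁻ y, H y := by
  have h1 : ∫⁻ x, H ((Dmap ha hb).toHomeomorph.toMeasurableEquiv x) =
      ∫⁻ y, H y ∂(Measure.map (⇑(Dmap ha hb).toHomeomorph.toMeasurableEquiv) volume) :=
    (lintegral_map_equiv H _).symm
  have h2 : ⇑(Dmap ha hb).toHomeomorph.toMeasurableEquiv = ⇑(Dmap ha hb) := rfl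
  rw [← h2]
  rw [h1, h2, map_Dmap ha hb, lintegral_smul_measure, smul_eq_mul]

lemma integral_comp_Dmap {a b : ℝ} (ha : a ≠ 0) (hb : b ≠ 0) (F : E2 → ℂ) :
    ∫ x, F (Dmap ha hb x) = |(a * b)⁻¹| • ∫ y, F y := by
  have h1 : ∫ x, F ((Dmap ha hb).toHomeomorph.toMeasurableEquiv x) =
      ∫ y, F y ∂(Measure.map (⇑(Dmap ha hb).toHomeomorph.toMeasurableEquiv) volume) :=
    (integral_map_equiv _ F).symm
  have h2 : ⇑(Dmap ha hb).toHomeomorph.toMeasurableEquiv = ⇑(Dmap ha hb) := rfl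
  rw [show (fun x => F (Dmap ha hb x)) =
    fun x => F ((Dmap ha hb).toHomeomorph.toMeasurableEquiv x) from rfl]
  rw [h1, h2, map_Dmap ha hb, integral_smul_measure, ENNReal.toReal_ofReal (abs_nonneg _)]

lemma fourier_comp_Dmap {a b : ℝ} (ha : a ≠ 0) (hb : b ≠ 0) (F : E2 → ℂ) (ξ : E2) :
    𝓕 (fun x => F (Dmap ha hb x)) ξ = |(a * b)⁻¹| • 𝓕 F ((Dmap ha hb).symm ξ) := by
  rw [Real.fourier_eq, Real.fourier_eq]
  have key : ∀ v : E2, ⟪Dmap ha hb v, (Dmap ha hb).symm ξ⟫ = ⟪v, ξ⟫ := by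
    intro v
    simp only [PiLp.inner_apply, RCLike.inner_apply, starRingEnd_apply, Fin.sum_univ_two,
      Dmap_apply ha hb, Dmap_symm_apply ha hb]
    simp only [Matrix.cons_val_zero, Matrix.cons_val_one, Matrix.head_cons, star_trivial]
    field_simp
  calc ∫ v, 𝐞 (-⟪v, ξ⟫) • F (Dmap ha hb v)
      = ∫ v, (fun y => 𝐞 (-⟪y, (Dmap ha hb).symm ξ⟫) • F y) (Dmap ha hb v) := by
        congr 1; funext v; simp only [key]
    _ = |(a * b)⁻¹| • ∫ y, 𝐞 (-⟪y, (Dmap ha hb).symm ξ⟫) • F y :=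
        integral_comp_Dmap ha hb (fun y => 𝐞 (-⟪y, (Dmap ha hb).symm ξ⟫) • F y)

lemma eLpNorm_comp_Dmap {a b : ℝ} (ha : a ≠ 0) (hb : b ≠ 0) (F : E2 → ℂ) {P : ℝ≥0∞}
    (hP0 : P ≠ 0) (hPt : P ≠ ∞) :
    eLpNorm (fun x => F (Dmap ha hb x)) P volume =
      (ENNReal.ofReal |(a * b)⁻¹|) ^ (1 / P.toReal) * eLpNorm F P volume := by
  rw [eLpNorm_eq_lintegral_rpow_enorm_toReal hP0 hPt, eLpNorm_eq_lintegral_rpow_enorm_toReal hP0 hPt,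
    lintegral_comp_Dmap ha hb (fun y => ‖F y‖ₑ ^ P.toReal),
    ENNReal.mul_rpow_of_nonneg _ _ (by positivity)]

end KnappAux

set_option maxHeartbeats 2000000 in
/-- Necessity of the condition `1/q ≥ (m+1)/p'` for the restriction estimate on the
finite type curve `{(x, x^m) : x ∈ [0,1]}` in the plane (Knapp box example). -/
theorem statement2 (m : ℕ) (hm : 2 ≤ m) (p q C : ℝ)
    (hp : 1 ≤ p) (hq : 1 ≤ q) (hC : 0 < C)
    (h : ∀ f : SchwartzMap (EuclideanSpace ℝ (Fin 2)) ℂ,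
      (∫ x in Ioc (0:ℝ) 1,
          ‖𝓕 (⇑f) ((EuclideanSpace.equiv (Fin 2) ℝ).symm ![x, x ^ m])‖ ^ q) ^ (1 / q) ≤
        C * (eLpNorm (⇑f) (ENNReal.ofReal p) volume).toReal) :
    ((m : ℝ) + 1) / (p / (p - 1)) ≤ 1 / q := by
  have hq0 : (0:ℝ) < q := lt_of_lt_of_le one_pos hq
  have hq0' : q ≠ 0 := ne_of_gt hq0
  -- the case `p = 1` is trivial since then `p/(p-1) = 1/0 = 0` by convention
  rcases eq_or_lt_of_le hp with hp1 | hp1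
  · rw [← hp1]
    norm_num
    positivity
  have hp0 : (0:ℝ) < p := lt_trans one_pos hp1
  -- the base Schwartz function, whose Fourier transform is the bump function
  set f₀ : SchwartzMap E2 ℂ := (SchwartzMap.fourierTransformCLE ℂ (SchwartzMap E2 ℂ)).symm gBump with hf₀def
  have hf₀ : 𝓕 ⇑f₀ = ⇑gBump := by
    have h1 : SchwartzMap.fourierTransformCLE ℂ (SchwartzMap E2 ℂ) f₀ = gBump :=
      (SchwartzMap.fourierTransformCLE ℂ (SchwartzMap E2 ℂ)).apply_symm_apply gBump
    rw [← h1]; rfl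
  set P : ℝ≥0∞ := ENNReal.ofReal p with hPdef
  have hP0 : P ≠ 0 := (ENNReal.ofReal_pos.2 hp0).ne'
  have hPt : P ≠ ∞ := ENNReal.ofReal_ne_top
  have hPre : P.toReal = p := ENNReal.toReal_ofReal hp0.le
  set K : ℝ := (eLpNorm (⇑f₀) P volume).toReal with hKdef
  have hK0 : 0 ≤ K := ENNReal.toReal_nonneg
  set N : ℝ := (m : ℝ) + 1 with hNdef
  have hN0 : 0 < N := by positivity
  -- Main scaling estimate: for all a ∈ (0,1],  a^(1/q) * a^(-N) ≤ C * K * a^(-N/p)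
  have main : ∀ a : ℝ, 0 < a → a ≤ 1 →
      a ^ (1/q) * a ^ (-N) ≤ C * K * a ^ (-(N/p)) := by
    intro a ha0 ha1
    have hb0 : (0:ℝ) < a ^ m := pow_pos ha0 m
    have hane : a ≠ 0 := ha0.ne'
    have hbne : a ^ m ≠ 0 := hb0.ne'
    have hab : (0:ℝ) < a * a ^ m := mul_pos ha0 hb0
    have habs : |(a * a ^ m)⁻¹| = (a * a ^ m)⁻¹ := abs_of_pos (inv_pos.2 hab)
    set D := Dmap hane hbne with hD
    set fa : SchwartzMap E2 ℂ := SchwartzMap.compCLMOfContinuousLinearEquiv ℝ D f₀ with hfa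
    have hfa_coe : ⇑fa = fun x => f₀ (D x) := by
      rw [hfa, SchwartzMap.compCLMOfContinuousLinearEquiv_apply]; rfl
    -- Fourier transform of the rescaled function on the curve
    have hFcurve : ∀ x : ℝ, 0 < x → x ≤ a →
        ‖𝓕 (⇑fa) ((EuclideanSpace.equiv (Fin 2) ℝ).symm ![x, x ^ m])‖ = (a * a ^ m)⁻¹ := by
      intro x hx0 hxa
      set ξ : E2 := (EuclideanSpace.equiv (Fin 2) ℝ).symm ![x, x ^ m] with hξ
      have hξi : ∀ i : Fin 2, ξ i = ![x, x ^ m] i := fun i => rfl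
      have hxan : 0 < a⁻¹ * x := mul_pos (inv_pos.2 ha0) hx0
      have hxan1 : a⁻¹ * x ≤ 1 := by
        rw [inv_mul_le_iff₀ ha0, mul_one]; exact hxa
      have hsym : ‖(D.symm ξ)‖ ≤ 2 := by
        have h0 : D.symm ξ 0 = a⁻¹ * x := by
          rw [Dmap_symm_apply, hξi]; simp
        have h1 : D.symm ξ 1 = (a ^ m)⁻¹ * x ^ m := by
          rw [Dmap_symm_apply, hξi]; simp
        have hy1 : (a ^ m)⁻¹ * x ^ m = (a⁻¹ * x) ^ m := by
          rw [mul_pow, inv_pow]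
        have hbd0 : ‖D.symm ξ 0‖ ^ 2 ≤ 1 := by
          rw [h0, Real.norm_eq_abs, abs_of_pos hxan]
          nlinarith
        have hbd1 : ‖D.symm ξ 1‖ ^ 2 ≤ 1 := by
          rw [h1, hy1, Real.norm_eq_abs, abs_of_pos (pow_pos hxan m)]
          have := pow_le_one₀ hxan.le hxan1 (n := m)
          nlinarith [pow_pos hxan m]
        rw [EuclideanSpace.norm_eq, Fin.sum_univ_two]
        calc √(‖D.symm ξ 0‖ ^ 2 + ‖D.symm ξ 1‖ ^ 2) ≤ √(2 ^ 2) := by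
              apply Real.sqrt_le_sqrt; nlinarith
          _ = 2 := Real.sqrt_sq two_pos.le
      have hkey : 𝓕 (⇑fa) ξ = |(a * a ^ m)⁻¹| • 𝓕 (⇑f₀) (D.symm ξ) := by
        rw [hfa_coe]; exact fourier_comp_Dmap hane hbne (⇑f₀) ξ
      rw [hkey, hf₀, gBump_eq_one hsym, norm_smul, norm_one, mul_one, Real.norm_eq_abs,
        habs]
      exact abs_of_pos (inv_pos.2 hab)
    -- lower bound for the left-hand side
    have hGcont : Continuous fun x : ℝ =>
        ‖𝓕 (⇑fa) ((EuclideanSpace.equiv (Fin 2) ℝ).symm ![x, x ^ m])‖ ^ q := by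
      have hFc : Continuous (𝓕 (⇑fa)) := by
        have : 𝓕 (⇑fa) = ⇑(SchwartzMap.fourierTransformCLM ℂ fa) := rfl
        rw [this]; exact (SchwartzMap.fourierTransformCLM ℂ fa).continuous
      have hcurve : Continuous fun x : ℝ =>
          (EuclideanSpace.equiv (Fin 2) ℝ).symm ![x, x ^ m] := by
        apply (EuclideanSpace.equiv (Fin 2) ℝ).symm.continuous.comp
        apply continuous_pi
        intro i
        fin_cases i
        · simpa using continuous_id'
        · simpa using continuous_pow m
      exact ((hFc.comp hcurve).norm).rpow_const (fun x => Or.inr hq0.le)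
    set G : ℝ → ℝ := fun x =>
      ‖𝓕 (⇑fa) ((EuclideanSpace.equiv (Fin 2) ℝ).symm ![x, x ^ m])‖ ^ q with hGdef
    have hGnn : ∀ x, 0 ≤ G x := fun x => Real.rpow_nonneg (norm_nonneg _) q
    have hstep1 : ∫ x in Ioc (0:ℝ) a, G x ≤ ∫ x in Ioc (0:ℝ) 1, G x := by
      apply setIntegral_mono_set (hGcont.integrableOn_Ioc)
      · exact Filter.Eventually.of_forall hGnn
      · exact Filter.Eventually.of_forall (fun x hx => ⟨hx.1, hx.2.trans ha1⟩)
    have hstep2 : ∫ x in Ioc (0:ℝ) a, G x = a * ((a * a ^ m)⁻¹) ^ q := by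
      rw [setIntegral_congr_fun measurableSet_Ioc
        (g := fun _ => ((a * a ^ m)⁻¹) ^ q)
        (fun x hx => by rw [hGdef]; simp only; rw [hFcurve x hx.1 hx.2])]
      simp [Real.volume_Ioc, ENNReal.toReal_ofReal ha0.le, smul_eq_mul, ha0.le]
    have hLHS : a ^ (1/q) * (a * a ^ m)⁻¹ ≤ (∫ x in Ioc (0:ℝ) 1, G x) ^ (1/q) := by
      have h1 : (a * ((a * a ^ m)⁻¹) ^ q) ^ (1/q) = a ^ (1/q) * (a * a ^ m)⁻¹ := by
        rw [Real.mul_rpow ha0.le (Real.rpow_nonneg (inv_pos.2 hab).le q),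
          ← Real.rpow_mul (inv_pos.2 hab).le, mul_one_div_cancel hq0', Real.rpow_one]
      rw [← h1]
      apply Real.rpow_le_rpow (by positivity) (hstep2 ▸ hstep1) (by positivity)
    -- upper bound for the right-hand side
    have hRHS : (eLpNorm (⇑fa) P volume).toReal = ((a * a ^ m)⁻¹) ^ (1/p) * K := by
      rw [hfa_coe, eLpNorm_comp_Dmap hane hbne (⇑f₀) hP0 hPt, ENNReal.toReal_mul,
        ← ENNReal.toReal_rpow, ENNReal.toReal_ofReal (abs_nonneg _), habs, hPre, hKdef]
    have hmain := h fa
    rw [hRHS] at hmain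
    have hmain2 : a ^ (1/q) * (a * a ^ m)⁻¹ ≤ C * (((a * a ^ m)⁻¹) ^ (1/p) * K) :=
      le_trans hLHS hmain
    -- convert `(a * a^m)⁻¹` into rpow of `a`
    have hconv : (a * a ^ m)⁻¹ = a ^ (-N) := by
      rw [← pow_succ' a m, ← Real.rpow_natCast a (m+1), ← Real.rpow_neg ha0.le]
      congr 1
      push_cast [hNdef]
      ring
    have hconv2 : ((a * a ^ m)⁻¹) ^ (1/p) = a ^ (-(N/p)) := by
      rw [hconv, ← Real.rpow_mul ha0.le]
      congr 1
      field_simp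
    calc a ^ (1/q) * a ^ (-N) = a ^ (1/q) * (a * a ^ m)⁻¹ := by rw [hconv]
      _ ≤ C * (((a * a ^ m)⁻¹) ^ (1/p) * K) := hmain2
      _ = C * K * a ^ (-(N/p)) := by rw [hconv2]; ring
  -- from the scaling estimate, derive `a ^ s ≤ C*K` for `s := 1/q - N + N/p`
  set s : ℝ := 1/q - N + N/p with hsdef
  have hs : ∀ a : ℝ, 0 < a → a ≤ 1 → a ^ s ≤ C * K := by
    intro a ha0 ha1
    have h1 := main a ha0 ha1
    have h2 : a ^ s = a ^ (1/q) * a ^ (-N) * a ^ (N/p) := by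
      rw [← Real.rpow_add ha0, ← Real.rpow_add ha0, hsdef]
      ring_nf
    have h3 : (0:ℝ) < a ^ (N/p) := Real.rpow_pos_of_pos ha0 _
    have h4 : a ^ (-(N/p)) * a ^ (N/p) = 1 := by
      rw [← Real.rpow_add ha0]; simp
    calc a ^ s = a ^ (1/q) * a ^ (-N) * a ^ (N/p) := h2
      _ ≤ C * K * a ^ (-(N/p)) * a ^ (N/p) := by
          exact mul_le_mul_of_nonneg_right h1 h3.le
      _ = C * K * (a ^ (-(N/p)) * a ^ (N/p)) := by ring
      _ = C * K := by rw [h4, mul_one]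
  -- `s ≥ 0`
  have hB1 : (1:ℝ) ≤ C * K := by
    have := hs 1 one_pos le_rfl
    rwa [Real.one_rpow] at this
  have hsnn : 0 ≤ s := by
    by_contra hneg
    push_neg at hneg
    set a₀ : ℝ := (C * K + 1) ^ s⁻¹ with ha₀
    have hCK1 : (1:ℝ) < C * K + 1 := by linarith
    have ha₀0 : 0 < a₀ := Real.rpow_pos_of_pos (by linarith) _
    have ha₀1 : a₀ ≤ 1 :=
      (Real.rpow_lt_one_of_one_lt_of_neg hCK1 (inv_neg''.2 hneg)).le
    have := hs a₀ ha₀0 ha₀1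
    rw [ha₀, ← Real.rpow_mul (by linarith : (0:ℝ) ≤ C * K + 1),
      inv_mul_cancel₀ hneg.ne, Real.rpow_one] at this
    linarith
  -- conclude
  have hgoal : ((m : ℝ) + 1) / (p / (p - 1)) = N - N/p := by
    rw [hNdef]
    have hp1' : p - 1 ≠ 0 := by linarith
    field_simp
  rw [hgoal]
  rw [hsdef] at hsnn
  linarith
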